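/- Under the hypotheses of Theorem 1 with t_k > 0 and θ_k ∈ (0,1] satisfying ∑_{i=0}^{k−1} t_i/θ_i = (1−θ_k) ∑_{i=0}^{k} t_i/θ_i, the accelerated proximal gradient iterates satisfy f(x_k) ≤ −f*(z_k) + ⟨z_k, x₀⟩ − (∑_{i=0}^{k−1} t_i/θ_i)/2 · ‖z_k‖², where z_k = (∑_{i=0}^{k−1} (t_i/θ_i) g_i)/(∑_{i=0}^{k−1} t_i/θ_i). -/

import Mathlib

open scoped RealInnerProductSpace

section Aux
variable {E : Type*} [NormedAddCommGroup E] [InnerProductSpace ℝ E] [CompleteSpace E]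

lemma grad_subgrad {φ : E → ℝ} {φ'a a : E} (hd : HasGradientAt φ φ'a a)
    (hc : ConvexOn ℝ Set.univ φ) (b : E) : φ a + ⟪φ'a, b - a⟫ ≤ φ b := by
  set c : ℝ → E := fun s => a + s • (b - a) with hcdef
  have hca : ∀ s : ℝ, HasDerivAt c (b - a) s := by
    intro s
    simpa [hcdef] using ((hasDerivAt_id s).smul_const (b - a)).const_add a
  have hc0 : c 0 = a := by simp [hcdef]
  have hc1 : c 1 = b := by simp [hcdef]
  have hq : HasDerivAt (φ ∘ c) ⟪φ'a, b - a⟫ 0 := by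
    have hfd : HasFDerivAt φ (InnerProductSpace.toDual ℝ E φ'a : E →L[ℝ] ℝ) (c 0) := by
      rw [hc0]; exact hd.hasFDerivAt
    have h := hfd.comp_hasDerivAt 0 (hca 0)
    simpa using h
  have hqc : ConvexOn ℝ Set.univ (φ ∘ c) := by
    have : ConvexOn ℝ ((AffineMap.lineMap a b : ℝ →ᵃ[ℝ] E) ⁻¹' Set.univ)
        (φ ∘ (AffineMap.lineMap a b : ℝ →ᵃ[ℝ] E)) := hc.comp_affineMap _
    have heq : (φ ∘ (AffineMap.lineMap a b : ℝ →ᵃ[ℝ] E)) = φ ∘ c := by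
      funext s
      simp [hcdef, AffineMap.lineMap_apply, add_comm]
    rw [Set.preimage_univ, heq] at this
    exact this
  have := hqc.le_slope_of_hasDerivAt (Set.mem_univ 0) (Set.mem_univ 1) zero_lt_one hq
  rw [slope_def_field] at this
  simp only [Function.comp, hc0, hc1] at this
  have h2 : ⟪φ'a, b - a⟫ ≤ φ b - φ a := by
    simpa [div_one] using this
  linarith

end Aux

variable {E : Type*} [NormedAddCommGroup E] [InnerProductSpace ℝ E] [FiniteDimensional ℝ E]

set_option maxHeartbeats 1000000

/-- Convex conjugate of an extended-real-valued function. -/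
noncomputable def conjFn (f : E → EReal) (z : E) : EReal :=
  ⨆ x : E, (((⟪z, x⟫ : ℝ) : EReal) - f x)

/-- Subdifferential of an extended-real-valued function. -/
def SubgradAt (f : E → EReal) (x : E) : Set E :=
  {g : E | ∀ y : E, f x + (((⟪g, y - x⟫ : ℝ)) : EReal) ≤ f y}

/-- Subdifferential of a real-valued function. -/
def RSubgradAt (f : E → ℝ) (x : E) : Set E :=
  {g : E | ∀ y : E, f x + ⟪g, y - x⟫ ≤ f y}

/-- Convexity for extended-real-valued functions. -/
def EConvex (f : E → EReal) : Prop :=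
  ∀ x y : E, ∀ a b : ℝ, 0 ≤ a → 0 ≤ b → a + b = 1 →
    f (a • x + b • y) ≤ ((a : ℝ) : EReal) * f x + ((b : ℝ) : EReal) * f y

/-- Properness of an extended-real-valued function. -/
def ProperFn (f : E → EReal) : Prop := (∃ x, f x ≠ ⊤) ∧ ∀ x, f x ≠ ⊥

/-- `p` is the proximal point `Prox_t(v)` of `ψ`, i.e. a minimizer of
`y ↦ ψ(y) + ‖y - v‖²/(2t)`. -/
def IsProxPt (ψ : E → EReal) (t : ℝ) (v p : E) : Prop :=
  ∀ y : E, ψ p + ((‖p - v‖^2 / (2*t) : ℝ) : EReal) ≤ ψ y + ((‖y - v‖^2 / (2*t) : ℝ) : EReal)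

/-- Theorem 1, case (b): conjugate-based bound for the accelerated
proximal gradient method. -/
theorem thm1_case_b (φ : E → ℝ) (φ' : E → E)
    (hφd : ∀ v, HasGradientAt φ (φ' v) v) (hφc : ConvexOn ℝ Set.univ φ)
    (ψ : E → EReal) (hψc : EConvex ψ) (hψp : ProperFn ψ) (hψlsc : LowerSemicontinuous ψ)
    (f : E → EReal) (hf : ∀ v, f v = ((φ v : ℝ) : EReal) + ψ v)
    (t : ℕ → ℝ) (ht : ∀ k, 0 < t k)
    (θ : ℕ → ℝ) (hθ0 : θ 0 = 1) (hθmem : ∀ k, θ k ∈ Set.Ioc (0:ℝ) 1)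
    (hcond : ∀ k : ℕ,
      (∑ i ∈ Finset.range k, t i / θ i) = (1 - θ k) * ∑ i ∈ Finset.range (k+1), t i / θ i)
    (x y g gψ : ℕ → E) (hy0 : y 0 = x 0)
    (hgψ : ∀ k, gψ k ∈ SubgradAt ψ (x (k+1)))
    (hg : ∀ k, g k = φ' (y k) + gψ k)
    (hx : ∀ k, x (k+1) = y k - t k • g k)
    (hy : ∀ k, y (k+1) = x (k+1) + ((θ (k+1) * (1 - θ k)) / θ k) • (x (k+1) - x k))
    (hdec : ∀ k, f (x (k+1)) ≤
      ((φ (y k) + ⟪gψ k, y k - x (k+1)⟫ - t k / 2 * ‖g k‖^2 : ℝ) : EReal) + ψ (x (k+1)))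
    (z : ℕ → E)
    (hz : ∀ k, z k = (∑ i ∈ Finset.range k, t i / θ i)⁻¹ •
      ∑ i ∈ Finset.range k, (t i / θ i) • g i) :
    ∀ k : ℕ, 1 ≤ k →
      f (x k)
        ≤ -(conjFn f (z k)) +
            ((⟪z k, x 0⟫ - (∑ i ∈ Finset.range k, t i / θ i) / 2 * ‖z k‖^2 : ℝ) : EReal) := by
  -- abbreviations
  obtain ⟨S, hSdef⟩ : ∃ S : ℕ → ℝ, ∀ k, S k = ∑ i ∈ Finset.range k, t i / θ i :=
    ⟨_, fun _ => rfl⟩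
  obtain ⟨v, hvdef⟩ : ∃ v : ℕ → E,
      ∀ k, v k = x 0 - ∑ i ∈ Finset.range k, (t i / θ i) • g i := ⟨_, fun _ => rfl⟩
  obtain ⟨ψR, hψRdef⟩ : ∃ ψR : ℕ → ℝ, ∀ k, ψR k = (ψ (x k)).toReal := ⟨_, fun _ => rfl⟩
  obtain ⟨F, hFdef⟩ : ∃ F : ℕ → ℝ, ∀ k, F k = φ (x k) + ψR k := ⟨_, fun _ => rfl⟩
  simp only [← hSdef] at hcond hz ⊢
  have hθpos : ∀ k, 0 < θ k := fun k => (hθmem k).1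
  have hθ1 : ∀ k, θ k ≤ 1 := fun k => (hθmem k).2
  have hτpos : ∀ k, 0 < t k / θ k := fun k => div_pos (ht k) (hθpos k)
  have hSsucc : ∀ k, S (k+1) = S k + t k / θ k := by
    intro k; rw [hSdef, hSdef, Finset.sum_range_succ]
  have hSnn : ∀ k, 0 ≤ S k := by
    intro k; rw [hSdef]; exact Finset.sum_nonneg fun i _ => (hτpos i).le
  have hSpos : ∀ k, 1 ≤ k → 0 < S k := by
    intro k hk; rw [hSdef]
    exact Finset.sum_pos (fun i _ => hτpos i) (by simp [Finset.nonempty_range_iff]; omega)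
  have hSθ : ∀ k, S (k+1) * θ k = t k / θ k := by
    intro k
    linear_combination (hSsucc k) + (hcond k)
  have hvsucc : ∀ k, v (k+1) = v k - (t k / θ k) • g k := by
    intro k; rw [hvdef, hvdef, Finset.sum_range_succ]; abel
  -- y k = (1 - θ k) • x k + θ k • v k
  have hyv : ∀ k, y k = (1 - θ k) • x k + θ k • v k := by
    intro k
    induction k with
    | zero =>
      rw [hy0, hθ0, hvdef]
      simp
    | succ k ih =>
      have hθk : θ k ≠ 0 := (hθpos k).ne'
      have hvk : v k = (θ k)⁻¹ • (y k - (1 - θ k) • x k) := by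
        rw [ih, add_sub_cancel_left, smul_smul, inv_mul_cancel₀ hθk, one_smul]
      have hgk : g k = (t k)⁻¹ • (y k - x (k+1)) := by
        rw [hx k, sub_sub_cancel, smul_smul, inv_mul_cancel₀ (ht k).ne', one_smul]
      rw [hy k, hvsucc k, hvk, hgk]
      have htk : t k ≠ 0 := (ht k).ne'
      match_scalars <;> field_simp <;> ring
  -- finiteness of ψ along iterates
  have hψne : ∀ k, ψ (x (k+1)) ≠ ⊤ := by
    intro k hcon
    obtain ⟨w0, hw0⟩ := hψp.1
    have h := hgψ k w0
    rw [hcon] at h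
    simp only [EReal.top_add_coe] at h
    exact hw0 (top_le_iff.mp h)
  have hψreal : ∀ k, ψ (x (k+1)) = ((ψR (k+1) : ℝ) : EReal) := by
    intro k; rw [hψRdef]; exact (EReal.coe_toReal (hψne k) (hψp.2 _)).symm
  -- key per-step inequality
  have hkey : ∀ k (w : E) (c : ℝ), ψ w = ((c : ℝ) : EReal) →
      F (k+1) ≤ (φ w + c) + (⟪g k, y k - w⟫ - t k / 2 * ‖g k‖^2) := by
    intro k w c hcw
    have h3 : ψR (k+1) + ⟪gψ k, w - x (k+1)⟫ ≤ c := by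
      have h := hgψ k w
      rw [hψreal k, hcw] at h
      exact_mod_cast h
    have h1 : φ (x (k+1)) + ψR (k+1) ≤
        (φ (y k) + ⟪gψ k, y k - x (k+1)⟫ - t k / 2 * ‖g k‖^2) + ψR (k+1) := by
      have h := hdec k
      rw [hf (x (k+1)), hψreal k] at h
      exact_mod_cast h
    have h2 : φ (y k) + ⟪φ' (y k), w - y k⟫ ≤ φ w := grad_subgrad (hφd (y k)) hφc w
    have e1 : ⟪g k, y k - w⟫ =
        -⟪φ' (y k), w - y k⟫ + ⟪gψ k, y k - x (k+1)⟫ - ⟪gψ k, w - x (k+1)⟫ := by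
      rw [hg k]
      simp only [inner_add_left, inner_sub_right]
      ring
    rw [hFdef]
    linarith
  -- Lyapunov decrease
  have hlyap : ∀ (w : E) (c : ℝ), ψ w = ((c : ℝ) : EReal) → ∀ k,
      S k * (F k - (φ w + c)) + ‖v k - w‖^2 / 2 ≤ ‖x 0 - w‖^2 / 2 := by
    intro w c hcw k
    induction k with
    | zero =>
      have hS0 : S 0 = 0 := by rw [hSdef]; simp
      have hv0 : v 0 = x 0 := by rw [hvdef]; simp
      rw [hS0, hv0]; simp
    | succ k ih =>
      have hθk := hθpos k
      have step : S (k+1) * (F (k+1) - (φ w + c)) + ‖v (k+1) - w‖^2 / 2 ≤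
          S k * (F k - (φ w + c)) + ‖v k - w‖^2 / 2 := by
        have h1' := hkey k w c hcw
        have hxk : (1 - θ k) * F (k+1) ≤
            (1 - θ k) * (F k + (⟪g k, y k - x k⟫ - t k / 2 * ‖g k‖^2)) := by
          rcases Nat.eq_zero_or_pos k with hk0 | hk1
          · subst hk0; rw [hθ0]; simp
          · obtain ⟨j, rfl⟩ : ∃ j, k = j + 1 := ⟨k - 1, by omega⟩
            have := hkey (j+1) (x (j+1)) (ψR (j+1)) (hψreal j)
            rw [← hFdef] at this
            exact mul_le_mul_of_nonneg_left this (by linarith [hθ1 (j+1)])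
        have e : ⟪g k, y k⟫ = (1 - θ k) * ⟪g k, x k⟫ + θ k * ⟪g k, v k⟫ := by
          rw [hyv k]
          simp [inner_add_right, real_inner_smul_right]
        have hinner : θ k * ⟪g k, y k - w⟫ + (1 - θ k) * ⟪g k, y k - x k⟫
            = θ k * ⟪g k, v k - w⟫ := by
          simp only [inner_sub_right]
          linear_combination e
        have hcomb : F (k+1) ≤ θ k * (φ w + c) + (1 - θ k) * F k
            + θ k * ⟪g k, v k - w⟫ - t k / 2 * ‖g k‖^2 := by
          have hm := mul_le_mul_of_nonneg_left h1' (hθpos k).le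
          nlinarith [hm, hxk, hinner]
        have hnorm : ‖v (k+1) - w‖^2 = ‖v k - w‖^2
            - 2 * (t k / θ k) * ⟪g k, v k - w⟫ + (t k / θ k)^2 * ‖g k‖^2 := by
          have hrw : v (k+1) - w = (v k - w) - (t k / θ k) • g k := by
            rw [hvsucc k]; abel
          rw [hrw, norm_sub_sq_real, real_inner_smul_right, norm_smul]
          rw [real_inner_comm (v k - w) (g k)]
          simp [mul_pow, sq_abs, inv_pow, div_eq_mul_inv]
          ring
        have hτθ : (t k / θ k) * θ k = t k := div_mul_cancel₀ _ (hθpos k).ne'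
        have hA2 := hSθ k
        have hA1 := hSsucc k
        have hA3 : (t k / θ k)^2 = S (k+1) * t k := by
          linear_combination (-(t k / θ k)) * hA2 + S (k+1) * hτθ
        have hm2 := mul_le_mul_of_nonneg_left hcomb (hSnn (k+1))
        have hrwp : S (k+1) * (θ k * (φ w + c) + (1 - θ k) * F k
              + θ k * ⟪g k, v k - w⟫ - t k / 2 * ‖g k‖^2)
            = (t k / θ k) * (φ w + c) + S k * F k + (t k / θ k) * ⟪g k, v k - w⟫
              - (t k / θ k)^2 / 2 * ‖g k‖^2 := by
          linear_combination (φ w + c + ⟪g k, v k - w⟫ - F k) * hA2 + F k * hA1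
            + ‖g k‖^2 / 2 * hA3
        have hSR : S (k+1) * (φ w + c) = S k * (φ w + c) + (t k / θ k) * (φ w + c) := by
          linear_combination (φ w + c) * hA1
        rw [hnorm]
        linarith [hm2, hrwp, hSR]
      linarith
  -- main real inequality
  intro k hk
  obtain ⟨j, rfl⟩ : ∃ j, k = j + 1 := ⟨k - 1, by omega⟩
  set k := j + 1
  have hSk := hSpos k hk
  have hvz : v k = x 0 - S k • z k := by
    rw [hvdef, hz k, smul_smul, mul_inv_cancel₀ hSk.ne', one_smul]
  have main : ∀ (w : E) (c : ℝ), ψ w = ((c : ℝ) : EReal) →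
      F k ≤ (φ w + c) + (⟪z k, x 0 - w⟫ - S k / 2 * ‖z k‖^2) := by
    intro w c hcw
    have hL := hlyap w c hcw k
    have hnrm : ‖v k - w‖^2 = ‖x 0 - w‖^2
        - 2 * S k * ⟪z k, x 0 - w⟫ + (S k)^2 * ‖z k‖^2 := by
      have hrw : v k - w = (x 0 - w) - S k • z k := by rw [hvz]; abel
      rw [hrw, norm_sub_sq_real, real_inner_smul_right, norm_smul]
      rw [real_inner_comm (x 0 - w) (z k)]
      simp [mul_pow, sq_abs, inv_pow]
      ring
    have hgoal : S k * F k ≤ S k * ((φ w + c) + (⟪z k, x 0 - w⟫ - S k / 2 * ‖z k‖^2)) := by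
      nlinarith [hL, hnrm]
    exact le_of_mul_le_mul_left hgoal hSk
  -- conclude in EReal
  have hfxk : f (x k) = ((F k : ℝ) : EReal) := by
    rw [hf (x k), hψreal j, hFdef]
    norm_cast
  have hconj : conjFn f (z k) ≤
      (((⟪z k, x 0⟫ - S k / 2 * ‖z k‖^2 - F k : ℝ)) : EReal) := by
    apply iSup_le
    intro w
    by_cases hw : ψ w = ⊤
    · have hfw : f w = ⊤ := by
        rw [hf w, hw]
        exact EReal.add_top_of_ne_bot (EReal.coe_ne_bot _)
      rw [hfw]
      simp
    · have hcw : ψ w = (((ψ w).toReal : ℝ) : EReal) := (EReal.coe_toReal hw (hψp.2 w)).symm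
      have hm := main w ((ψ w).toReal) hcw
      rw [hf w, hcw, ← EReal.coe_add, ← EReal.coe_sub]
      rw [EReal.coe_le_coe_iff]
      have hi : ⟪z k, x 0 - w⟫ = ⟪z k, x 0⟫ - ⟪z k, w⟫ := inner_sub_right _ _ _
      linarith
  have h1 : ((F k - (⟪z k, x 0⟫ - S k / 2 * ‖z k‖^2) : ℝ) : EReal)
      ≤ -(conjFn f (z k)) := by
    have : ((F k - (⟪z k, x 0⟫ - S k / 2 * ‖z k‖^2) : ℝ) : EReal)
        = -(((⟪z k, x 0⟫ - S k / 2 * ‖z k‖^2 - F k : ℝ)) : EReal) := by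
      rw [← EReal.coe_neg]
      norm_num
    rw [this]
    exact EReal.neg_le_neg_iff.mpr hconj
  rw [hfxk]
  calc ((F k : ℝ) : EReal)
      = ((F k - (⟪z k, x 0⟫ - S k / 2 * ‖z k‖^2) : ℝ) : EReal)
        + ((⟪z k, x 0⟫ - S k / 2 * ‖z k‖^2 : ℝ) : EReal) := by
        rw [← EReal.coe_add]; norm_cast; ring
    _ ≤ -(conjFn f (z k)) + ((⟪z k, x 0⟫ - S k / 2 * ‖z k‖^2 : ℝ) : EReal) :=
        add_le_add_left h1 _
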